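/- arXiv:2307.04079 — 2 statements merged into one kernel-verified Lean document; each statement's English description precedes it below -/
import Mathlib

section
/- For a nontrivial finite projective rectangle of order (m,n) (i.e., one that is not a projective plane), there is an integer τ ≥ 1 such that n = m + τ m(m-1); in particular n ≥ m^2. -/
/-- A projective rectangle: an incidence structure satisfying axioms (A1)-(A6). -/
structure ProjRect (Point Line : Type) where
  Incid : Point → Line → Prop
  /-- (A4) the special point. -/
  D : Point
  /-- (A1) every two distinct points lie on exactly one line. -/
  A1 : ∀ p q : Point, p ≠ q → ∃! l : Line, Incid p l ∧ Incid q l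
  /-- (A2) there exist four points with no three collinear. -/
  A2 : ∃ a b c d : Point, a ≠ b ∧ a ≠ c ∧ a ≠ d ∧ b ≠ c ∧ b ≠ d ∧ c ≠ d ∧
    (∀ l : Line, ¬(Incid a l ∧ Incid b l ∧ Incid c l)) ∧
    (∀ l : Line, ¬(Incid a l ∧ Incid b l ∧ Incid d l)) ∧
    (∀ l : Line, ¬(Incid a l ∧ Incid c l ∧ Incid d l)) ∧
    (∀ l : Line, ¬(Incid b l ∧ Incid c l ∧ Incid d l))
  /-- (A3) every line has at least three points. -/
  A3 : ∀ l : Line, ∃ p q r : Point, p ≠ q ∧ p ≠ r ∧ q ≠ r ∧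
    Incid p l ∧ Incid q l ∧ Incid r l
  /-- (A5) each special line intersects every other line in exactly one point. -/
  A5 : ∀ s l : Line, Incid D s → l ≠ s → ∃! p : Point, Incid p s ∧ Incid p l
  /-- (A6) restricted Pasch axiom. -/
  A6 : ∀ l1 l2 l3 l4 : Line, ∀ p p13 p14 p23 p24 : Point,
    ¬Incid D l1 → ¬Incid D l2 → l1 ≠ l2 → Incid p l1 → Incid p l2 → l3 ≠ l4 →
    Incid p13 l1 → Incid p13 l3 → Incid p14 l1 → Incid p14 l4 →
    Incid p23 l2 → Incid p23 l3 → Incid p24 l2 → Incid p24 l4 →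
    p13 ≠ p14 → p13 ≠ p23 → p13 ≠ p24 → p14 ≠ p23 → p14 ≠ p24 → p23 ≠ p24 →
    ∃ q : Point, Incid q l3 ∧ Incid q l4

/-- A projective rectangle has order (m,n) if it has exactly m+1 special lines and
each special line has exactly n+1 points. -/
def ProjRect.HasOrder {Point Line : Type} (R : ProjRect Point Line) (m n : ℕ) : Prop :=
  Set.ncard {l : Line | R.Incid R.D l} = m + 1 ∧
  ∀ s : Line, R.Incid R.D s → Set.ncard {p : Point | R.Incid p s} = n + 1

lemma class_partition {α : Type} (k : ℕ) (r : α → α → Prop) :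
    ∀ N : ℕ, ∀ T : Set α, T.Finite → T.ncard = N →
    (∀ x ∈ T, r x x) →
    (∀ x ∈ T, ∀ y ∈ T, r x y → r y x) →
    (∀ x ∈ T, ∀ y ∈ T, ∀ z ∈ T, r x y → r y z → r x z) →
    (∀ x ∈ T, {y | y ∈ T ∧ r x y}.ncard = k) →
    k ∣ N := by
  intro N
  induction N using Nat.strong_induction_on with
  | _ N ih =>
    intro T hT hN hrefl hsymm htrans hk
    rcases T.eq_empty_or_nonempty with hE | ⟨x, hx⟩
    · subst hE; simp [Set.ncard_empty] at hN; simp [← hN]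
    · set C : Set α := {y | y ∈ T ∧ r x y} with hC
      have hCsub : C ⊆ T := fun y hy => hy.1
      have hCk : C.ncard = k := hk x hx
      have hxC : x ∈ C := ⟨hx, hrefl x hx⟩
      have hCfin : C.Finite := hT.subset hCsub
      have hkpos : 0 < k := by
        rw [← hCk]; exact (Set.ncard_pos hCfin).mpr ⟨x, hxC⟩
      set T' := T \ C with hT'
      have hT'fin : T'.Finite := hT.diff
      have hcard : T'.ncard + C.ncard = T.ncard :=
        Set.ncard_diff_add_ncard_of_subset hCsub hT
      have hlt : T'.ncard < N := by omega
      have hclass : ∀ y ∈ T', {z | z ∈ T' ∧ r y z} = {z | z ∈ T ∧ r y z} := by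
        intro y hy
        ext z
        constructor
        · rintro ⟨hz, hr⟩; exact ⟨hz.1, hr⟩
        · rintro ⟨hz, hr⟩
          refine ⟨⟨hz, fun hzC => ?_⟩, hr⟩
          exact hy.2 ⟨hy.1, htrans x hx z hz y hy.1 hzC.2 (hsymm y hy.1 z hz hr)⟩
      have hdvd : k ∣ T'.ncard := by
        refine ih T'.ncard hlt T' hT'fin rfl ?_ ?_ ?_ ?_
        · exact fun y hy => hrefl y hy.1
        · exact fun y hy z hz hr => hsymm y hy.1 z hz.1 hr
        · exact fun y hy z hz w hw h1 h2 => htrans y hy.1 z hz.1 w hw.1 h1 h2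
        · intro y hy
          rw [hclass y hy]
          exact hk y hy.1
      have : N = T'.ncard + k := by omega
      rw [this]
      exact Nat.dvd_add hdvd dvd_rfl



namespace ProjRect

variable {Point Line : Type} (R : ProjRect Point Line)

lemma pt_unique {l l' : Line} (h : l ≠ l') {p q : Point}
    (hp : R.Incid p l) (hp' : R.Incid p l') (hq : R.Incid q l) (hq' : R.Incid q l') :
    p = q := by
  by_contra hpq
  exact h ((R.A1 p q hpq).unique ⟨hp, hq⟩ ⟨hp', hq'⟩)

noncomputable def join (p q : Point) (h : p ≠ q) : Line := (R.A1 p q h).exists.choose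

lemma join_left (p q : Point) (h : p ≠ q) : R.Incid p (R.join p q h) :=
  (R.A1 p q h).exists.choose_spec.1

lemma join_right (p q : Point) (h : p ≠ q) : R.Incid q (R.join p q h) :=
  (R.A1 p q h).exists.choose_spec.2

lemma join_eq {p q : Point} (h : p ≠ q) {l : Line} (hp : R.Incid p l) (hq : R.Incid q l) :
    l = R.join p q h := by
  by_contra hne
  exact h (R.pt_unique hne hp (R.join_left p q h) hq (R.join_right p q h))

lemma line_eq_of_two {p q : Point} (hpq : p ≠ q) {l l' : Line}
    (hp : R.Incid p l) (hq : R.Incid q l) (hp' : R.Incid p l') (hq' : R.Incid q l') :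
    l = l' := (R.join_eq hpq hp hq).trans (R.join_eq hpq hp' hq').symm

noncomputable def meet (s l : Line) (hs : R.Incid R.D s) (hne : l ≠ s) : Point :=
  (R.A5 s l hs hne).exists.choose

lemma meet_left (s l : Line) (hs : R.Incid R.D s) (hne : l ≠ s) :
    R.Incid (R.meet s l hs hne) s := (R.A5 s l hs hne).exists.choose_spec.1

lemma meet_right (s l : Line) (hs : R.Incid R.D s) (hne : l ≠ s) :
    R.Incid (R.meet s l hs hne) l := (R.A5 s l hs hne).exists.choose_spec.2

lemma meet_eq {s l : Line} (hs : R.Incid R.D s) (hne : l ≠ s) {p : Point}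
    (hp : R.Incid p s) (hp' : R.Incid p l) : p = R.meet s l hs hne :=
  (R.A5 s l hs hne).unique ⟨hp, hp'⟩ ⟨R.meet_left s l hs hne, R.meet_right s l hs hne⟩

variable {m n : ℕ}

lemma spec_finite (h : R.HasOrder m n) : {l : Line | R.Incid R.D l}.Finite := by
  by_contra hh
  have h2 := Set.Infinite.ncard (show {l : Line | R.Incid R.D l}.Infinite from hh)
  rw [h.1] at h2
  omega

lemma spts_finite (h : R.HasOrder m n) (s : Line) (hs : R.Incid R.D s) :
    {p : Point | R.Incid p s}.Finite := by
  by_contra hh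
  have h2 := Set.Infinite.ncard (show {p : Point | R.Incid p s}.Infinite from hh)
  rw [h.2 s hs] at h2
  omega

lemma ord_card (h : R.HasOrder m n) (l : Line) (hl : ¬R.Incid R.D l) :
    {p : Point | R.Incid p l}.Finite ∧ {p : Point | R.Incid p l}.ncard = m + 1 := by
  classical
  have hSfin : {g : Line | R.Incid R.D g}.Finite := R.spec_finite h
  set f : Point → Line := fun p => if hp : p ≠ R.D then R.join p R.D hp else l with hf
  have hne : ∀ p, R.Incid p l → p ≠ R.D := by
    intro p hp hpD; exact hl (hpD ▸ hp)
  have hfp : ∀ p (hp : R.Incid p l), R.Incid p (f p) ∧ R.Incid R.D (f p) := by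
    intro p hp
    have hpD := hne p hp
    simp only [hf, dif_pos hpD]
    exact ⟨R.join_left p R.D hpD, R.join_right p R.D hpD⟩
  have hbij : Set.BijOn f {p : Point | R.Incid p l} {g : Line | R.Incid R.D g} := by
    refine ⟨fun p hp => (hfp p hp).2, ?_, ?_⟩
    · intro p hp q hq hpq
      have h1 := hfp p hp
      have h2 := hfp q hq
      have hgl : f p ≠ l := fun hc => hl (hc ▸ h1.2)
      exact R.pt_unique hgl h1.1 hp (hpq ▸ h2.1) hq
    · intro g hg
      have hlg : l ≠ g := fun hc => hl (hc ▸ hg)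
      set p := R.meet g l hg hlg with hp
      have hps : R.Incid p g := R.meet_left g l hg hlg
      have hpl : R.Incid p l := R.meet_right g l hg hlg
      refine ⟨p, hpl, ?_⟩
      have hpD := hne p hpl
      simp only [hf, dif_pos hpD]
      exact (R.line_eq_of_two hpD hps (hg) (R.join_left p R.D hpD) (R.join_right p R.D hpD)).symm
  have hfin : {p : Point | R.Incid p l}.Finite :=
    Set.Finite.of_finite_image (hbij.image_eq ▸ hSfin) hbij.injOn
  have hcard : {p : Point | R.Incid p l}.ncard = m + 1 := by
    rw [← h.1, ← hbij.image_eq, Set.ncard_image_of_injOn hbij.injOn]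
  exact ⟨hfin, hcard⟩


lemma config_dvd (h : R.HasOrder m n) (L0 s : Line) (a b : Point) (k : ℕ)
    (hL0a : R.Incid a L0) (hL0b : R.Incid b L0) (hab : a ≠ b)
    (haD : a ≠ R.D) (hbD : b ≠ R.D)
    (hs : R.Incid R.D s) (has : ¬R.Incid a s) (hbs : ¬R.Incid b s)
    (hcase : (R.Incid a (R.join b R.D hbD) ∧ k = m) ∨
      (¬R.Incid a (R.join b R.D hbD) ∧ k = m - 1)) :
    k ∣ {x : Point | R.Incid x s ∧ x ≠ R.D ∧ ¬R.Incid x L0}.ncard := by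
  classical
  set sb : Line := R.join b R.D hbD with hsbdef
  have hsbD : R.Incid R.D sb := R.join_right b R.D hbD
  have hsbb : R.Incid b sb := R.join_left b R.D hbD
  set T : Set Point := {x : Point | R.Incid x s ∧ x ≠ R.D ∧ ¬R.Incid x L0} with hTdef
  set r : Point → Point → Prop := fun x y => ∃ (u : Point) (l l' : Line),
    R.Incid a l ∧ R.Incid x l ∧ R.Incid b l' ∧ R.Incid y l' ∧ R.Incid u l ∧ R.Incid u l'
    with hrdef
  -- basic helper facts
  have hax : ∀ x : Point, R.Incid x s → a ≠ x := fun x hxs hc => has (hc ▸ hxs)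
  have hbx : ∀ x : Point, R.Incid x s → b ≠ x := fun x hxs hc => hbs (hc ▸ hxs)
  -- notation for the joins
  have haxl : ∀ (x : Point) (hxs : R.Incid x s), R.Incid a (R.join a x (hax x hxs)) :=
    fun x hxs => R.join_left a x (hax x hxs)
  have haxr : ∀ (x : Point) (hxs : R.Incid x s), R.Incid x (R.join a x (hax x hxs)) :=
    fun x hxs => R.join_right a x (hax x hxs)
  have hbxl : ∀ (x : Point) (hxs : R.Incid x s), R.Incid b (R.join b x (hbx x hxs)) :=
    fun x hxs => R.join_left b x (hbx x hxs)
  have hbxr : ∀ (x : Point) (hxs : R.Incid x s), R.Incid x (R.join b x (hbx x hxs)) :=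
    fun x hxs => R.join_right b x (hbx x hxs)
  -- D is not on join a x
  have hDax : ∀ (x : Point) (hxs : R.Incid x s) (hxD : x ≠ R.D),
      ¬R.Incid R.D (R.join a x (hax x hxs)) := by
    intro x hxs hxD hc
    exact has ((R.line_eq_of_two hxD (haxr x hxs) hc hxs hs) ▸ haxl x hxs)
  have hDbx : ∀ (x : Point) (hxs : R.Incid x s) (hxD : x ≠ R.D),
      ¬R.Incid R.D (R.join b x (hbx x hxs)) := by
    intro x hxs hxD hc
    exact hbs ((R.line_eq_of_two hxD (hbxr x hxs) hc hxs hs) ▸ hbxl x hxs)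
  -- b is not on join a x (for x off L0)
  have hbax : ∀ (x : Point) (hxs : R.Incid x s) (hxL0 : ¬R.Incid x L0),
      ¬R.Incid b (R.join a x (hax x hxs)) := by
    intro x hxs hxL0 hc
    exact hxL0 ((R.line_eq_of_two hab (haxl x hxs) hc hL0a hL0b) ▸ haxr x hxs)
  -- a is not on join b y (for y off L0)
  have haby : ∀ (y : Point) (hys : R.Incid y s) (hyL0 : ¬R.Incid y L0),
      ¬R.Incid a (R.join b y (hbx y hys)) := by
    intro y hys hyL0 hc
    exact hyL0 ((R.line_eq_of_two hab hc (hbxl y hys) hL0a hL0b) ▸ hbxr y hys)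
  -- a point of s on join a x must be x
  have hs_ax : ∀ (x p : Point) (hxs : R.Incid x s), R.Incid p s →
      R.Incid p (R.join a x (hax x hxs)) → p = x := by
    intro x p hxs hps hpax
    have hne : R.join a x (hax x hxs) ≠ s := fun hc => has (hc ▸ haxl x hxs)
    exact R.pt_unique hne hpax hps (haxr x hxs) hxs
  have hs_bx : ∀ (x p : Point) (hxs : R.Incid x s), R.Incid p s →
      R.Incid p (R.join b x (hbx x hxs)) → p = x := by
    intro x p hxs hps hpbx
    have hne : R.join b x (hbx x hxs) ≠ s := fun hc => hbs (hc ▸ hbxl x hxs)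
    exact R.pt_unique hne hpbx hps (hbxr x hxs) hxs
  -- normal form of r
  have rnorm : ∀ x y, R.Incid x s → R.Incid y s → r x y →
      ∀ (h1 : a ≠ x) (h2 : b ≠ y), ∃ u, R.Incid u (R.join a x h1) ∧ R.Incid u (R.join b y h2) := by
    rintro x y hxs hys ⟨u, l, l', hal, hxl, hbl, hyl, hul, hul'⟩ h1 h2
    exact ⟨u, (R.join_eq h1 hal hxl) ▸ hul, (R.join_eq h2 hbl hyl) ▸ hul'⟩
  -- reflexivity
  have hrefl : ∀ x ∈ T, r x x := by
    rintro x ⟨hxs, hxD, hxL0⟩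
    exact ⟨x, R.join a x (hax x hxs), R.join b x (hbx x hxs),
      haxl x hxs, haxr x hxs, hbxl x hxs, hbxr x hxs, haxr x hxs, hbxr x hxs⟩
  -- symmetry
  have hsymm : ∀ x ∈ T, ∀ y ∈ T, r x y → r y x := by
    rintro x ⟨hxs, hxD, hxL0⟩ y ⟨hys, hyD, hyL0⟩ hr
    rcases eq_or_ne x y with rfl | hxy
    · exact hrefl x ⟨hxs, hxD, hxL0⟩
    obtain ⟨u, hu1, hu2⟩ := rnorm x y hxs hys hr (hax x hxs) (hbx y hys)
    have hl12 : R.join a x (hax x hxs) ≠ R.join b y (hbx y hys) := by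
      intro hc
      exact haby y hys hyL0 (hc ▸ haxl x hxs)
    have hl34 : R.join a y (hax y hys) ≠ R.join b x (hbx x hxs) := by
      intro hc
      exact hbax y hys hyL0 (by rw [hc]; exact hbxl x hxs)
    obtain ⟨q, hq1, hq2⟩ := R.A6 (R.join a x (hax x hxs)) (R.join b y (hbx y hys))
      (R.join a y (hax y hys)) (R.join b x (hbx x hxs)) u a x y b
      (hDax x hxs hxD) (hDbx y hys hyD) hl12 hu1 hu2 hl34
      (haxl x hxs) (R.join_left a y (hax y hys)) (haxr x hxs) (hbxr x hxs)
      (hbxr y hys) (R.join_right a y (hax y hys)) (hbxl y hys) (hbxl x hxs)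
      (hax x hxs) (hax y hys) hab hxy (fun hc => hbs (hc ▸ hxs))
      (fun hc => hbs (hc ▸ hys))
    exact ⟨q, R.join a y (hax y hys), R.join b x (hbx x hxs),
      R.join_left a y (hax y hys), R.join_right a y (hax y hys),
      hbxl x hxs, hbxr x hxs, hq1, hq2⟩
  -- transitivity
  have htrans : ∀ x ∈ T, ∀ y ∈ T, ∀ z ∈ T, r x y → r y z → r x z := by
    rintro x ⟨hxs, hxD, hxL0⟩ y ⟨hys, hyD, hyL0⟩ z ⟨hzs, hzD, hzL0⟩ hr1 hr2
    rcases eq_or_ne x y with rfl | hxy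
    · exact hr2
    rcases eq_or_ne y z with rfl | hyz
    · exact hr1
    rcases eq_or_ne x z with rfl | hxz
    · exact hrefl x ⟨hxs, hxD, hxL0⟩
    obtain ⟨u, hu1, hu2⟩ := rnorm x y hxs hys hr1 (hax x hxs) (hbx y hys)
    obtain ⟨v, hv1, hv2⟩ := rnorm y z hys hzs hr2 (hax y hys) (hbx z hzs)
    -- u ≠ a, u ≠ b, u ≠ v, b ≠ v, a ≠ v
    have hua : u ≠ a := fun hc => haby y hys hyL0 (hc ▸ hu2)
    have hub : u ≠ b := fun hc => hbax x hxs hxL0 (hc ▸ hu1)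
    have hav : a ≠ v := fun hc => haby z hzs hzL0 (hc ▸ hv2)
    have hbv : b ≠ v := fun hc => hbax y hys hyL0 (hc ▸ hv1)
    have huv : u ≠ v := by
      intro hc
      subst hc
      -- u on join a x and join a y, both containing a; lines distinct since x ≠ y
      have hlne : R.join a x (hax x hxs) ≠ R.join a y (hax y hys) := by
        intro hc2
        exact hxy (hs_ax x y hxs hys (by rw [hc2]; exact R.join_right a y (hax y hys))).symm
      exact hua (R.pt_unique hlne hu1 hv1 (haxl x hxs) (R.join_left a y (hax y hys)))
    have hl12 : R.join b y (hbx y hys) ≠ R.join a y (hax y hys) := by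
      intro hc
      exact haby y hys hyL0 (hc ▸ R.join_left a y (hax y hys))
    have hl34 : R.join a x (hax x hxs) ≠ R.join b z (hbx z hzs) := by
      intro hc
      exact haby z hzs hzL0 (hc ▸ haxl x hxs)
    obtain ⟨q, hq1, hq2⟩ := R.A6 (R.join b y (hbx y hys)) (R.join a y (hax y hys))
      (R.join a x (hax x hxs)) (R.join b z (hbx z hzs)) y u b a v
      (hDbx y hys hyD) (hDax y hys hyD) hl12 (hbxr y hys) (R.join_right a y (hax y hys)) hl34
      hu2 hu1 (hbxl y hys) (R.join_left b z (hbx z hzs))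
      (R.join_left a y (hax y hys)) (haxl x hxs) hv1 hv2
      hub hua huv (hab.symm) hbv hav
    exact ⟨q, R.join a x (hax x hxs), R.join b z (hbx z hzs),
      haxl x hxs, haxr x hxs, R.join_left b z (hbx z hzs), R.join_right b z (hbx z hzs),
      hq1, hq2⟩
  -- finiteness of T
  have hTfin : T.Finite := (R.spts_finite h s hs).subset (fun x hx => hx.1)
  -- class sizes
  have hclasscard : ∀ x ∈ T, {y | y ∈ T ∧ r x y}.ncard = k := by
    rintro x ⟨hxs, hxD, hxL0⟩
    have hbAX : ¬R.Incid b (R.join a x (hax x hxs)) := hbax x hxs hxL0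
    have hAXL0 : R.join a x (hax x hxs) ≠ L0 := fun hc => hxL0 (hc ▸ haxr x hxs)
    set f : Point → Point := fun u => if hbu : b ≠ u then R.meet s (R.join b u hbu) hs
        (fun hc => hbs (hc ▸ R.join_left b u hbu)) else R.D with hfdef
    have hfspec : ∀ (u : Point) (hbu : b ≠ u), R.Incid (f u) s ∧ R.Incid (f u) (R.join b u hbu) := by
      intro u hbu
      simp only [hfdef, dif_pos hbu]
      exact ⟨R.meet_left s (R.join b u hbu) hs _, R.meet_right s (R.join b u hbu) hs _⟩
    set U : Set Point := {u | R.Incid u (R.join a x (hax x hxs)) ∧ u ≠ a ∧ ¬R.Incid u sb}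
      with hUdef
    have hbij : Set.BijOn f U {y | y ∈ T ∧ r x y} := by
      have hbu : ∀ u ∈ U, b ≠ u := fun u hu hc => hbAX (hc ▸ hu.1)
      refine ⟨?_, ?_, ?_⟩
      · -- maps to
        rintro u ⟨huAX, hua, husb⟩
        have hbu' : b ≠ u := fun hc => hbAX (hc ▸ huAX)
        obtain ⟨hys, hybu⟩ := hfspec u hbu'
        have hyD : f u ≠ R.D := by
          intro hc
          have hDbu : R.Incid R.D (R.join b u hbu') := hc ▸ hybu
          have : R.join b u hbu' = sb :=
            R.line_eq_of_two hbD (R.join_left b u hbu') hDbu hsbb hsbD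
          exact husb (this ▸ R.join_right b u hbu')
        have hyL0 : ¬R.Incid (f u) L0 := by
          intro hc
          have hyb : b ≠ f u := hbx (f u) hys
          have : R.join b u hbu' = L0 :=
            R.line_eq_of_two hyb (R.join_left b u hbu') hybu hL0b hc
          have huL0 : R.Incid u L0 := this ▸ R.join_right b u hbu'
          exact hua (R.pt_unique hAXL0 huAX huL0 (haxl x hxs) hL0a)
        refine ⟨⟨hys, hyD, hyL0⟩, ?_⟩
        exact ⟨u, R.join a x (hax x hxs), R.join b u hbu', haxl x hxs, haxr x hxs,
          R.join_left b u hbu', hybu, huAX, R.join_right b u hbu'⟩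
      · -- injective
        rintro u ⟨huAX, hua, husb⟩ u' ⟨hu'AX, hu'a, hu'sb⟩ hffeq
        have hbu1 : b ≠ u := fun hc => hbAX (hc ▸ huAX)
        have hbu2 : b ≠ u' := fun hc => hbAX (hc ▸ hu'AX)
        obtain ⟨hys, hybu⟩ := hfspec u hbu1
        obtain ⟨hys', hybu'⟩ := hfspec u' hbu2
        rw [← hffeq] at hybu'
        have hyb : b ≠ f u := hbx (f u) hys
        have hlines : R.join b u hbu1 = R.join b u' hbu2 :=
          R.line_eq_of_two hyb (R.join_left b u hbu1) hybu (R.join_left b u' hbu2) hybu'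
        have hAXbu : R.join a x (hax x hxs) ≠ R.join b u hbu1 :=
          fun hc => hbAX (hc ▸ R.join_left b u hbu1)
        exact R.pt_unique hAXbu huAX (R.join_right b u hbu1) hu'AX
          (hlines ▸ R.join_right b u' hbu2)
      · -- surjective
        rintro y ⟨⟨hys, hyD, hyL0⟩, hrxy⟩
        obtain ⟨u, hu1, hu2⟩ := rnorm x y hxs hys hrxy (hax x hxs) (hbx y hys)
        have hua : u ≠ a := fun hc => haby y hys hyL0 (hc ▸ hu2)
        have hub : b ≠ u := fun hc => hbAX (hc.symm ▸ hu1)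
        have husb : ¬R.Incid u sb := by
          intro hc
          have : R.join b y (hbx y hys) = sb :=
            R.line_eq_of_two hub (R.join_left b y (hbx y hys)) hu2 hsbb hc
          have hDby : R.Incid R.D (R.join b y (hbx y hys)) := by rw [this]; exact hsbD
          exact hyD (hs_bx y R.D hys hs hDby).symm
        refine ⟨u, ⟨hu1, hua, husb⟩, ?_⟩
        have hjoins : R.join b y (hbx y hys) = R.join b u hub :=
          R.join_eq hub (R.join_left b y (hbx y hys)) hu2
        obtain ⟨hfs, hfbu⟩ := hfspec u hub
        have hyu : R.Incid y (R.join b u hub) := hjoins ▸ R.join_right b y (hbx y hys)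
        have : y = R.meet s (R.join b u hub) hs (fun hc => hbs (hc ▸ R.join_left b u hub)) :=
          R.meet_eq hs _ hys hyu
        simp only [hfdef, dif_pos hub]
        exact this.symm
    -- cardinality of U
    have hDAX : ¬R.Incid R.D (R.join a x (hax x hxs)) := hDax x hxs hxD
    obtain ⟨hAXfin, hAXcard⟩ := R.ord_card h (R.join a x (hax x hxs)) hDAX
    have hAXsb : R.join a x (hax x hxs) ≠ sb := by
      intro hc
      have hxsb : R.Incid x sb := hc ▸ haxr x hxs
      have : sb = s := R.line_eq_of_two hxD hxsb hsbD hxs hs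
      exact hbs (this ▸ hsbb)
    set e : Point := R.meet sb (R.join a x (hax x hxs)) hsbD hAXsb with hedef
    have he1 : R.Incid e sb := R.meet_left _ _ _ _
    have he2 : R.Incid e (R.join a x (hax x hxs)) := R.meet_right _ _ _ _
    have hUeq : U = {p | R.Incid p (R.join a x (hax x hxs))} \ ({a, e} : Set Point) := by
      ext u
      constructor
      · rintro ⟨huAX, hua, husb⟩
        refine ⟨huAX, ?_⟩
        simp only [Set.mem_insert_iff, Set.mem_singleton_iff]
        push_neg
        exact ⟨hua, fun hc => husb (hc ▸ he1)⟩
      · rintro ⟨huAX, hu⟩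
        simp only [Set.mem_insert_iff, Set.mem_singleton_iff] at hu
        push_neg at hu
        refine ⟨huAX, hu.1, fun hc => hu.2 (R.meet_eq hsbD hAXsb hc huAX)⟩
    have hcardclass : {y | y ∈ T ∧ r x y}.ncard = U.ncard := by
      rw [← hbij.image_eq, Set.ncard_image_of_injOn hbij.injOn]
    rw [hcardclass, hUeq]
    rcases hcase with ⟨hasb, hk⟩ | ⟨hnasb, hk⟩
    · have hae : a = e := R.meet_eq hsbD hAXsb hasb (haxl x hxs)
      have hset : ({a, e} : Set Point) = {a} := by rw [← hae]; simp
      rw [hset, Set.ncard_diff (by simpa using haxl x hxs) (Set.finite_singleton a),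
        hAXcard, Set.ncard_singleton, hk]
      omega
    · have hae : a ≠ e := fun hc => hnasb (hc ▸ he1)
      have hsub : ({a, e} : Set Point) ⊆ {p | R.Incid p (R.join a x (hax x hxs))} := by
        intro p hp
        rcases hp with rfl | hp
        · exact haxl x hxs
        · simp only [Set.mem_singleton_iff] at hp; subst hp; exact he2
      rw [Set.ncard_diff hsub ((Set.finite_singleton e).insert a),
        hAXcard, Set.ncard_pair hae, hk]
      omega
  exact class_partition k r T.ncard T hTfin rfl hrefl hsymm htrans hclasscard


lemma exists_two_ne_D_on (s : Line) :
    ∃ a b : Point, R.Incid a s ∧ R.Incid b s ∧ a ≠ b ∧ a ≠ R.D ∧ b ≠ R.D := by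
  obtain ⟨p, q, r, hpq, hpr, hqr, hp, hq, hr⟩ := R.A3 s
  rcases eq_or_ne p R.D with rfl | hpD
  · exact ⟨q, r, hq, hr, hqr, hpq.symm, hpr.symm⟩
  rcases eq_or_ne q R.D with rfl | hqD
  · exact ⟨p, r, hp, hr, hpr, hpD, hqr.symm⟩
  · exact ⟨p, q, hp, hq, hpq, hpD, hqD⟩

lemma m_ge_two (h : R.HasOrder m n) (L0 : Line) (hD : ¬R.Incid R.D L0) : 2 ≤ m := by
  obtain ⟨hfin, hcard⟩ := R.ord_card h L0 hD
  obtain ⟨p, q, r, hpq, hpr, hqr, hp, hq, hr⟩ := R.A3 L0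
  have h2 : 2 < {p : Point | R.Incid p L0}.ncard :=
    (Set.two_lt_ncard hfin).mpr ⟨p, hp, q, hq, r, hr, hpq, hpr, hqr⟩
  omega

lemma m_dvd_n (h : R.HasOrder m n) (hm : 1 ≤ m) : m ∣ n := by
  have hSfin := R.spec_finite h
  have h2 : 1 < {l : Line | R.Incid R.D l}.ncard := by rw [h.1]; omega
  obtain ⟨s0, hs0, s1, hs1, hne⟩ := (Set.one_lt_ncard hSfin).mp h2
  obtain ⟨a, b, ha, hb, hab, haD, hbD⟩ := R.exists_two_ne_D_on s0
  have key : ∀ x : Point, R.Incid x s1 → x ≠ R.D → ¬R.Incid x s0 :=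
    fun x hx hxD hc => hxD (R.pt_unique hne hc hx hs0 hs1)
  have has : ¬R.Incid a s1 := fun hc => haD (R.pt_unique hne ha hc hs0 hs1)
  have hbs : ¬R.Incid b s1 := fun hc => hbD (R.pt_unique hne hb hc hs0 hs1)
  have hjoin : s0 = R.join b R.D hbD := R.join_eq hbD hb hs0
  have hdvd := R.config_dvd h s0 s1 a b m ha hb hab haD hbD hs1 has hbs
    (Or.inl ⟨hjoin ▸ ha, rfl⟩)
  have hTeq : {x : Point | R.Incid x s1 ∧ x ≠ R.D ∧ ¬R.Incid x s0} =
      {p : Point | R.Incid p s1} \ {R.D} := by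
    ext x
    constructor
    · rintro ⟨h1, h2, _⟩; exact ⟨h1, h2⟩
    · rintro ⟨h1, h2⟩
      exact ⟨h1, h2, key x h1 h2⟩
  rw [hTeq, Set.ncard_diff (by simpa using hs1) (Set.finite_singleton _),
    h.2 s1 hs1, Set.ncard_singleton] at hdvd
  simpa using hdvd

lemma sub_one_dvd (h : R.HasOrder m n) (L0 : Line) (hDL0 : ¬R.Incid R.D L0)
    (hm : 2 ≤ m) : (m - 1) ∣ (n - 1) := by
  obtain ⟨a, b, ha, hb, hab, haD, hbD⟩ := R.exists_two_ne_D_on L0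
  have hsaD : R.Incid R.D (R.join a R.D haD) := R.join_right a R.D haD
  have hsbD : R.Incid R.D (R.join b R.D hbD) := R.join_right b R.D hbD
  have hsasb : R.join a R.D haD ≠ R.join b R.D hbD := by
    intro hc
    have hbsa : R.Incid b (R.join a R.D haD) := by rw [hc]; exact R.join_left b R.D hbD
    have : R.join a R.D haD = L0 :=
      R.line_eq_of_two hab (R.join_left a R.D haD) hbsa ha hb
    exact hDL0 (this ▸ hsaD)
  have hpairlt : ({R.join a R.D haD, R.join b R.D hbD} : Set Line).ncard <
      {l : Line | R.Incid R.D l}.ncard := by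
    rw [Set.ncard_pair hsasb, h.1]; omega
  obtain ⟨s, hsS, hs_not⟩ := Set.exists_mem_notMem_of_ncard_lt_ncard hpairlt
    (Set.Finite.insert _ (Set.finite_singleton _))
  simp only [Set.mem_insert_iff, Set.mem_singleton_iff] at hs_not
  push_neg at hs_not
  have hsD : R.Incid R.D s := hsS
  have has : ¬R.Incid a s := fun hc => hs_not.1
    (R.line_eq_of_two haD hc hsD (R.join_left a R.D haD) hsaD)
  have hbs : ¬R.Incid b s := fun hc => hs_not.2
    (R.line_eq_of_two hbD hc hsD (R.join_left b R.D hbD) hsbD)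
  have hnasb : ¬R.Incid a (R.join b R.D hbD) := by
    intro hc
    have : R.join b R.D hbD = L0 :=
      R.line_eq_of_two hab hc (R.join_left b R.D hbD) ha hb
    exact hDL0 (this ▸ hsbD)
  have hdvd := R.config_dvd h L0 s a b (m - 1) ha hb hab haD hbD hsD has hbs
    (Or.inr ⟨hnasb, rfl⟩)
  have hL0s : L0 ≠ s := fun hc => hDL0 (hc ▸ hsD)
  set c : Point := R.meet s L0 hsD hL0s with hcdef
  have hc1 : R.Incid c s := R.meet_left _ _ _ _
  have hc2 : R.Incid c L0 := R.meet_right _ _ _ _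
  have hDc : R.D ≠ c := fun hc => hDL0 (hc ▸ hc2)
  have hTeq : {x : Point | R.Incid x s ∧ x ≠ R.D ∧ ¬R.Incid x L0} =
      {p : Point | R.Incid p s} \ ({R.D, c} : Set Point) := by
    ext x
    constructor
    · rintro ⟨h1, h2, h3⟩
      refine ⟨h1, ?_⟩
      simp only [Set.mem_insert_iff, Set.mem_singleton_iff]
      push_neg
      exact ⟨h2, fun hc => h3 (hc ▸ hc2)⟩
    · rintro ⟨h1, h2⟩
      simp only [Set.mem_insert_iff, Set.mem_singleton_iff] at h2
      push_neg at h2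
      exact ⟨h1, h2.1, fun hc => h2.2 (R.meet_eq hsD hL0s h1 hc)⟩
  have hsub : ({R.D, c} : Set Point) ⊆ {p : Point | R.Incid p s} := by
    intro p hp
    rcases hp with rfl | hp
    · exact hsD
    · simp only [Set.mem_singleton_iff] at hp; subst hp; exact hc1
  rw [hTeq, Set.ncard_diff hsub ((Set.finite_singleton c).insert _),
    h.2 s hsD, Set.ncard_pair hDc] at hdvd
  have : n + 1 - 2 = n - 1 := by omega
  rwa [this] at hdvd

lemma n_ge (h : R.HasOrder m n) (l1 l2 : Line) (hne : l1 ≠ l2)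
    (hdisj : ∀ p : Point, ¬(R.Incid p l1 ∧ R.Incid p l2))
    (hD1 : ¬R.Incid R.D l1) (hD2 : ¬R.Incid R.D l2) : m + 1 ≤ n := by
  classical
  obtain ⟨a, _, _, _, _, _, ha, _, _⟩ := R.A3 l1
  have haD : a ≠ R.D := fun hc => hD1 (hc ▸ ha)
  have hsaD : R.Incid R.D (R.join a R.D haD) := R.join_right a R.D haD
  have h1lt : ({R.join a R.D haD} : Set Line).ncard < {l : Line | R.Incid R.D l}.ncard := by
    rw [Set.ncard_singleton, h.1]
    have := R.m_ge_two h l1 hD1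
    omega
  obtain ⟨s, hsS, hs_not⟩ := Set.exists_mem_notMem_of_ncard_lt_ncard h1lt
    (Set.finite_singleton _)
  simp only [Set.mem_singleton_iff] at hs_not
  have hsD : R.Incid R.D s := hsS
  have has : ¬R.Incid a s := fun hc => hs_not
    (R.line_eq_of_two haD hc hsD (R.join_left a R.D haD) hsaD)
  have hl2sa : l2 ≠ R.join a R.D haD := fun hc => hD2 (hc ▸ hsaD)
  set q0 : Point := R.meet (R.join a R.D haD) l2 hsaD hl2sa with hq0def
  have hq0sa : R.Incid q0 (R.join a R.D haD) := R.meet_left _ _ _ _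
  have hq0l2 : R.Incid q0 l2 := R.meet_right _ _ _ _
  have haq : ∀ q : Point, R.Incid q l2 → a ≠ q := fun q hq hc => hdisj q ⟨hc ▸ ha, hq⟩
  set ψ : Point → Point := fun q => if hq : a ≠ q then R.meet s (R.join a q hq) hsD
      (fun hc => has (hc ▸ R.join_left a q hq)) else R.D with hψdef
  have hψspec : ∀ (q : Point) (hq : a ≠ q),
      R.Incid (ψ q) s ∧ R.Incid (ψ q) (R.join a q hq) := by
    intro q hq
    simp only [hψdef, dif_pos hq]
    exact ⟨R.meet_left _ _ _ _, R.meet_right _ _ _ _⟩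
  set P2 : Set Point := {p : Point | R.Incid p l2} \ {q0} with hP2def
  have hDaq : ∀ (q : Point) (hql2 : R.Incid q l2), q ≠ q0 →
      ¬R.Incid R.D (R.join a q (haq q hql2)) := by
    intro q hql2 hqq0 hc
    have : R.join a q (haq q hql2) = R.join a R.D haD :=
      R.line_eq_of_two haD (R.join_left a q (haq q hql2)) hc (R.join_left a R.D haD) hsaD
    have hqsa : R.Incid q (R.join a R.D haD) := this ▸ R.join_right a q (haq q hql2)
    exact hqq0 (R.meet_eq hsaD hl2sa hqsa hql2)
  have hψP2 : ∀ q ∈ P2, R.Incid (ψ q) s ∧ ψ q ≠ R.D := by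
    intro q hq
    obtain ⟨hql2, hqq0⟩ := hq
    obtain ⟨h1, h2⟩ := hψspec q (haq q hql2)
    refine ⟨h1, fun hc => ?_⟩
    exact hDaq q hql2 hqq0 (hc ▸ h2)
  have hinj : Set.InjOn ψ P2 := by
    rintro q ⟨hql2, hqq0⟩ q' ⟨hq'l2, hq'q0⟩ heq
    obtain ⟨h1, h2⟩ := hψspec q (haq q hql2)
    obtain ⟨h1', h2'⟩ := hψspec q' (haq q' hq'l2)
    rw [← heq] at h2'
    have hwa : ψ q ≠ a := fun hc => has (hc ▸ h1)
    by_contra hqq'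
    have hjj : R.join a q (haq q hql2) ≠ R.join a q' (haq q' hq'l2) := by
      intro hc
      have hq'j : R.Incid q' (R.join a q (haq q hql2)) := by
        rw [hc]; exact R.join_right a q' (haq q' hq'l2)
      have : R.join a q (haq q hql2) = l2 :=
        R.line_eq_of_two (show q ≠ q' from hqq') (R.join_right a q (haq q hql2)) hq'j hql2 hq'l2
      exact hdisj a ⟨ha, this ▸ R.join_left a q (haq q hql2)⟩
    exact hwa (R.pt_unique hjj h2 h2' (R.join_left a q (haq q hql2))
      (R.join_left a q' (haq q' hq'l2))).symm.symm
  have hl1s : l1 ≠ s := fun hc => has (hc ▸ ha)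
  set w1 : Point := R.meet s l1 hsD hl1s with hw1def
  have hw1s : R.Incid w1 s := R.meet_left _ _ _ _
  have hw1l1 : R.Incid w1 l1 := R.meet_right _ _ _ _
  have hw1D : w1 ≠ R.D := fun hc => hD1 (hc ▸ hw1l1)
  have hw1nim : w1 ∉ ψ '' P2 := by
    rintro ⟨q, ⟨hql2, hqq0⟩, hqeq⟩
    obtain ⟨h1, h2⟩ := hψspec q (haq q hql2)
    rw [hqeq] at h2
    have hjl1 : R.join a q (haq q hql2) ≠ l1 := by
      intro hc
      exact hdisj q ⟨hc ▸ R.join_right a q (haq q hql2), hql2⟩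
    have : a = w1 := R.pt_unique hjl1 (R.join_left a q (haq q hql2)) ha h2 hw1l1
    exact has (this ▸ hw1s)
  obtain ⟨hl2fin, hl2card⟩ := R.ord_card h l2 hD2
  have hP2fin : P2.Finite := hl2fin.diff
  have hP2card : P2.ncard = m := by
    rw [hP2def, Set.ncard_diff (by simpa using hq0l2) (Set.finite_singleton _), hl2card,
      Set.ncard_singleton]
    omega
  have himfin : (ψ '' P2).Finite := hP2fin.image _
  have himcard : (ψ '' P2).ncard = m := by rw [Set.ncard_image_of_injOn hinj, hP2card]
  have hWsub : insert w1 (ψ '' P2) ⊆ {p : Point | R.Incid p s} \ {R.D} := by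
    intro p hp
    rcases hp with rfl | hp
    · exact ⟨hw1s, hw1D⟩
    · obtain ⟨q, hq, rfl⟩ := hp
      obtain ⟨h1, h2⟩ := hψP2 q hq
      exact ⟨h1, h2⟩
  have hWcard : (insert w1 (ψ '' P2)).ncard = m + 1 := by
    rw [Set.ncard_insert_of_notMem hw1nim himfin, himcard]
  have hsfin : ({p : Point | R.Incid p s} \ {R.D}).Finite := (R.spts_finite h s hsD).diff
  have hle := Set.ncard_le_ncard hWsub hsfin
  rw [hWcard, Set.ncard_diff (by simpa using hsD) (Set.finite_singleton _), h.2 s hsD,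
    Set.ncard_singleton] at hle
  omega

end ProjRect

/-- For a nontrivial finite projective rectangle of order (m,n) there is an integer
τ ≥ 1 with n = m + τ·m·(m-1); in particular n ≥ m². -/
theorem stmt_18 {Point Line : Type} (R : ProjRect Point Line) (m n : ℕ)
    (h : R.HasOrder m n)
    (hnontriv : ∃ l1 l2 : Line, l1 ≠ l2 ∧ ∀ p : Point, ¬(R.Incid p l1 ∧ R.Incid p l2)) :
    ∃ τ : ℕ, 1 ≤ τ ∧ n = m + τ * m * (m - 1) ∧ m ^ 2 ≤ n := by
  obtain ⟨l1, l2, hne, hdisj⟩ := hnontriv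
  have hD1 : ¬R.Incid R.D l1 := by
    intro hD
    exact hdisj (R.meet l1 l2 hD hne.symm) ⟨R.meet_left _ _ _ _, R.meet_right _ _ _ _⟩
  have hD2 : ¬R.Incid R.D l2 := by
    intro hD
    exact hdisj (R.meet l2 l1 hD hne) ⟨R.meet_right _ _ _ _, R.meet_left _ _ _ _⟩
  have hm2 : 2 ≤ m := R.m_ge_two h l1 hD1
  have hmn : m ∣ n := R.m_dvd_n h (by omega)
  have hm1n : (m - 1) ∣ (n - 1) := R.sub_one_dvd h l1 hD1 hm2
  have hnm : m + 1 ≤ n := R.n_ge h l1 l2 hne hdisj hD1 hD2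
  set d : ℕ := n - m with hddef
  have hd : n = m + d := by omega
  have hdpos : 0 < d := by omega
  have hmd : m ∣ d := by
    have := Nat.dvd_sub hmn (dvd_refl m)
    simpa [hddef] using this
  have hm1d : (m - 1) ∣ d := by
    have h2 := Nat.dvd_sub hm1n (dvd_refl (m - 1))
    have : n - 1 - (m - 1) = d := by omega
    rwa [this] at h2
  have hcop : Nat.Coprime m (m - 1) := by
    have hm1 : m - 1 + 1 = m := by omega
    rw [Nat.Coprime, ← hm1]
    simp [Nat.succ_sub_one, Nat.gcd_comm]
  obtain ⟨t, ht⟩ := hcop.mul_dvd_of_dvd_of_dvd hmd hm1d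
  have ht1 : 1 ≤ t := by
    rcases Nat.eq_zero_or_pos t with rfl | hpos
    · simp at ht; omega
    · exact hpos
  refine ⟨t, ht1, ?_, ?_⟩
  · have : t * m * (m - 1) = m * (m - 1) * t := by ring
    rw [this, ← ht]
    omega
  · have hle : m * (m - 1) ≤ d := by
      calc m * (m - 1) = m * (m - 1) * 1 := by ring
        _ ≤ m * (m - 1) * t := Nat.mul_le_mul_left _ ht1
        _ = d := ht.symm
    have hsq : m ^ 2 = m + m * (m - 1) := by
      have h1 : m - 1 + 1 = m := by omega
      nlinarith [h1]
    omega
end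

section
/- Let G be a quasigroup with more than one element and let L_0(G K_3) be the incidence structure with points {a_g, b_g, c_g : g in G} together with D, special lines A = {a_g} ∪ {D}, B = {b_g} ∪ {D}, C = {c_g} ∪ {D}, and ordinary lines {a_g, b_{gh}, c_h} for g, h in G. Then L_0(G K_3) is a projective rectangle (with special point D) if and only if G is isotopic to a commutative group in which every element squares to the identity. -/
/-- The incidence relation of the structure $L_0(\mathfrak{G}K_3)$ built from a
quasigroup G: points are a_g, b_g, c_g (encoded (g,0),(g,1),(g,2)) and D; special
lines A, B, C (encoded 0,1,2) and ordinary lines {a_g, b_{gh}, c_h} (encoded (g,h)). -/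
def QGIncid {G : Type} [Mul G] : (G × Fin 3) ⊕ Unit → (Fin 3 ⊕ G × G) → Prop
  | Sum.inl (_, i), Sum.inl j => i = j
  | Sum.inr _, Sum.inl _ => True
  | Sum.inl (x, i), Sum.inr (g, h) =>
      (i = 0 ∧ x = g) ∨ (i = 1 ∧ x = g * h) ∨ (i = 2 ∧ x = h)
  | Sum.inr _, Sum.inr _ => False


section QGAux
variable {G : Type} [Mul G]

lemma qg_slot_unique {x y g h : G} {i : Fin 3}
    (hx : QGIncid (Sum.inl (x,i)) (Sum.inr (g,h)))
    (hy : QGIncid (Sum.inl (y,i)) (Sum.inr (g,h))) : x = y := by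
  fin_cases i <;> simp [QGIncid] at hx hy <;> rw [hx, hy]

variable (hq : ∀ a : G, Function.Bijective (fun x => a * x) ∧
      Function.Bijective (fun x => x * a))

include hq in
lemma qg_lcancel {a x y : G} (h : a * x = a * y) : x = y := (hq a).1.injective h

include hq in
lemma qg_rcancel {a x y : G} (h : x * a = y * a) : x = y := (hq a).2.injective h

noncomputable def qg_ldiv (a b : G) : G := ((hq a).1.surjective b).choose

lemma qg_ldiv_spec (a b : G) : a * qg_ldiv hq a b = b := ((hq a).1.surjective b).choose_spec

noncomputable def qg_rdiv (a b : G) : G := ((hq a).2.surjective b).choose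

lemma qg_rdiv_spec (a b : G) : qg_rdiv hq a b * a = b := ((hq a).2.surjective b).choose_spec

include hq in
/-- Two distinct-slot points determine an ordinary line uniquely. -/
lemma qg_line_unique {x y g h g' h' : G} {i j : Fin 3} (hij : i ≠ j)
    (h1 : QGIncid (Sum.inl (x,i)) (Sum.inr (g,h)))
    (h2 : QGIncid (Sum.inl (y,j)) (Sum.inr (g,h)))
    (h3 : QGIncid (Sum.inl (x,i)) (Sum.inr (g',h')))
    (h4 : QGIncid (Sum.inl (y,j)) (Sum.inr (g',h'))) : g = g' ∧ h = h' := by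
  fin_cases i <;> fin_cases j <;> simp_all [QGIncid] <;>
    first | exact qg_lcancel hq h4 | exact qg_lcancel hq h3 |
      exact qg_rcancel hq h4 | exact qg_rcancel hq h3

end QGAux

section Build
variable {G : Type} [Mul G]
variable (hq : ∀ a : G, Function.Bijective (fun x => a * x) ∧
      Function.Bijective (fun x => x * a))

include hq in
lemma qg_A1 : ∀ p q : (G × Fin 3) ⊕ Unit, p ≠ q →
    ∃! l : Fin 3 ⊕ G × G, QGIncid p l ∧ QGIncid q l := by
  have ordU : ∀ (x y : G) (i j : Fin 3), i ≠ j → ∀ g₀ h₀ : G,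
      QGIncid (Sum.inl (x,i)) (Sum.inr (g₀,h₀)) → QGIncid (Sum.inl (y,j)) (Sum.inr (g₀,h₀)) →
      ∃! l, QGIncid (Sum.inl (x,i)) l ∧ QGIncid (Sum.inl (y,j)) l := by
    intro x y i j hij g₀ h₀ hx hy
    refine ⟨Sum.inr (g₀,h₀), ⟨hx, hy⟩, ?_⟩
    rintro (j' | ⟨g,h⟩) ⟨h1, h2⟩
    · have e1 : i = j' := h1
      have e2 : j = j' := h2
      exact absurd (e1.trans e2.symm) hij
    · obtain ⟨eg, eh⟩ := qg_line_unique hq hij h1 h2 hx hy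
      rw [eg, eh]
  rintro (⟨x,i⟩ | ⟨⟩) (⟨y,j⟩ | ⟨⟩) hne
  · by_cases hij : i = j
    · subst hij
      have hxy : x ≠ y := fun h => hne (by rw [h])
      refine ⟨Sum.inl i, ⟨rfl, rfl⟩, ?_⟩
      rintro (j' | ⟨g,h⟩) ⟨h1, h2⟩
      · have e1 : i = j' := h1
        rw [e1]
      · exact absurd (qg_slot_unique h1 h2) hxy
    · fin_cases i <;> fin_cases j <;> try exact absurd rfl hij
      · -- i = 0, j = 1
        exact ordU x y 0 1 (by decide) x (qg_ldiv hq x y)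
          (Or.inl ⟨rfl, rfl⟩) (Or.inr (Or.inl ⟨rfl, (qg_ldiv_spec hq x y).symm⟩))
      · -- i = 0, j = 2
        exact ordU x y 0 2 (by decide) x y (Or.inl ⟨rfl, rfl⟩) (Or.inr (Or.inr ⟨rfl, rfl⟩))
      · -- i = 1, j = 0
        exact ordU x y 1 0 (by decide) y (qg_ldiv hq y x)
          (Or.inr (Or.inl ⟨rfl, (qg_ldiv_spec hq y x).symm⟩)) (Or.inl ⟨rfl, rfl⟩)
      · -- i = 1, j = 2
        exact ordU x y 1 2 (by decide) (qg_rdiv hq y x) y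
          (Or.inr (Or.inl ⟨rfl, (qg_rdiv_spec hq y x).symm⟩)) (Or.inr (Or.inr ⟨rfl, rfl⟩))
      · -- i = 2, j = 0
        exact ordU x y 2 0 (by decide) y x (Or.inr (Or.inr ⟨rfl, rfl⟩)) (Or.inl ⟨rfl, rfl⟩)
      · -- i = 2, j = 1
        exact ordU x y 2 1 (by decide) (qg_rdiv hq x y) x
          (Or.inr (Or.inr ⟨rfl, rfl⟩)) (Or.inr (Or.inl ⟨rfl, (qg_rdiv_spec hq x y).symm⟩))
  · -- point and D
    refine ⟨Sum.inl i, ⟨rfl, trivial⟩, ?_⟩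
    rintro (j' | ⟨g,h⟩) ⟨h1, h2⟩
    · have e1 : i = j' := h1
      rw [e1]
    · exact absurd h2 (fun f => f)
  · refine ⟨Sum.inl j, ⟨trivial, rfl⟩, ?_⟩
    rintro (j' | ⟨g,h⟩) ⟨h1, h2⟩
    · have e1 : j = j' := h2
      rw [e1]
    · exact absurd h1 (fun f => f)
  · exact absurd rfl hne

end Build

section Build2
variable {G : Type} [Mul G]

lemma qg_A2 [Nontrivial G] : ∃ a b c d : (G × Fin 3) ⊕ Unit, a ≠ b ∧ a ≠ c ∧ a ≠ d ∧
    b ≠ c ∧ b ≠ d ∧ c ≠ d ∧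
    (∀ l : Fin 3 ⊕ G × G, ¬(QGIncid a l ∧ QGIncid b l ∧ QGIncid c l)) ∧
    (∀ l : Fin 3 ⊕ G × G, ¬(QGIncid a l ∧ QGIncid b l ∧ QGIncid d l)) ∧
    (∀ l : Fin 3 ⊕ G × G, ¬(QGIncid a l ∧ QGIncid c l ∧ QGIncid d l)) ∧
    (∀ l : Fin 3 ⊕ G × G, ¬(QGIncid b l ∧ QGIncid c l ∧ QGIncid d l)) := by
  obtain ⟨g₀, h₀⟩ : Nonempty (G × G) := inferInstance
  obtain ⟨k, hk⟩ := exists_ne (g₀ * h₀)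
  refine ⟨Sum.inl (g₀, 0), Sum.inl (k, 1), Sum.inl (h₀, 2), Sum.inr (), ?_, ?_, ?_, ?_, ?_, ?_,
    ?_, ?_, ?_, ?_⟩
  · simp
  · simp
  · simp
  · simp
  · simp
  · simp
  · rintro (j | ⟨g, h⟩) ⟨h1, h2, h3⟩
    · have e1 : (0 : Fin 3) = j := h1
      have e2 : (1 : Fin 3) = j := h2
      rw [← e1] at e2; exact absurd e2 (by decide)
    · simp only [QGIncid] at h1 h2 h3
      simp at h1 h2 h3
      exact hk (by rw [h2, ← h1, ← h3])
  · rintro (j | ⟨g, h⟩) ⟨h1, h2, h3⟩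
    · have e1 : (0 : Fin 3) = j := h1
      have e2 : (1 : Fin 3) = j := h2
      rw [← e1] at e2; exact absurd e2 (by decide)
    · exact h3
  · rintro (j | ⟨g, h⟩) ⟨h1, h2, h3⟩
    · have e1 : (0 : Fin 3) = j := h1
      have e2 : (2 : Fin 3) = j := h2
      rw [← e1] at e2; exact absurd e2 (by decide)
    · exact h3
  · rintro (j | ⟨g, h⟩) ⟨h1, h2, h3⟩
    · have e1 : (1 : Fin 3) = j := h1
      have e2 : (2 : Fin 3) = j := h2
      rw [← e1] at e2; exact absurd e2 (by decide)
    · exact h3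

lemma qg_A3 [Nontrivial G] : ∀ l : Fin 3 ⊕ G × G, ∃ p q r : (G × Fin 3) ⊕ Unit,
    p ≠ q ∧ p ≠ r ∧ q ≠ r ∧ QGIncid p l ∧ QGIncid q l ∧ QGIncid r l := by
  rintro (j | ⟨g, h⟩)
  · obtain ⟨x, y, hxy⟩ := exists_pair_ne G
    exact ⟨Sum.inl (x, j), Sum.inl (y, j), Sum.inr (),
      by simp [hxy], by simp, by simp, rfl, rfl, trivial⟩
  · exact ⟨Sum.inl (g, 0), Sum.inl (g * h, 1), Sum.inl (h, 2),
      by simp, by simp, by simp,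
      Or.inl ⟨rfl, rfl⟩, Or.inr (Or.inl ⟨rfl, rfl⟩), Or.inr (Or.inr ⟨rfl, rfl⟩)⟩

lemma qg_A5 : ∀ s l : Fin 3 ⊕ G × G, QGIncid (Sum.inr ()) s → l ≠ s →
    ∃! p : (G × Fin 3) ⊕ Unit, QGIncid p s ∧ QGIncid p l := by
  rintro (j | ⟨g, h⟩) l hD hls
  swap
  · exact absurd hD (fun f => f)
  rcases l with j' | ⟨g, h⟩
  · have hjj : j' ≠ j := fun e => hls (by rw [e])
    refine ⟨Sum.inr (), ⟨trivial, trivial⟩, ?_⟩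
    rintro (⟨x, i⟩ | ⟨⟩) ⟨h1, h2⟩
    · have e1 : i = j := h1
      have e2 : i = j' := h2
      exact absurd (e2.symm.trans e1) hjj
    · rfl
  · fin_cases j
    · refine ⟨Sum.inl (g, 0), ⟨rfl, Or.inl ⟨rfl, rfl⟩⟩, ?_⟩
      rintro (⟨x, i⟩ | ⟨⟩) ⟨h1, h2⟩
      · have e1 : i = 0 := h1
        subst e1
        simp [QGIncid] at h2
        rw [h2]
      · exact absurd h2 (fun f => f)
    · refine ⟨Sum.inl (g * h, 1), ⟨rfl, Or.inr (Or.inl ⟨rfl, rfl⟩)⟩, ?_⟩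
      rintro (⟨x, i⟩ | ⟨⟩) ⟨h1, h2⟩
      · have e1 : i = 1 := h1
        subst e1
        simp [QGIncid] at h2
        rw [h2]
      · exact absurd h2 (fun f => f)
    · refine ⟨Sum.inl (h, 2), ⟨rfl, Or.inr (Or.inr ⟨rfl, rfl⟩)⟩, ?_⟩
      rintro (⟨x, i⟩ | ⟨⟩) ⟨h1, h2⟩
      · have e1 : i = 2 := h1
        subst e1
        simp [QGIncid] at h2
        rw [h2]
      · exact absurd h2 (fun f => f)

end Build2

section Build3
variable {G : Type} [Mul G]
variable (hq : ∀ a : G, Function.Bijective (fun x => a * x) ∧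
      Function.Bijective (fun x => x * a))

lemma fin3_pigeon : ∀ a b c d : Fin 3, b ≠ a → c ≠ a → b ≠ c → d ≠ a → d ≠ b → d = c := by
  intro a b c d
  fin_cases a <;> fin_cases b <;> fin_cases c <;> fin_cases d <;> decide

lemma fin3_triples : ∀ a b c : Fin 3, b ≠ a → c ≠ a → b ≠ c →
    (a = 0 ∧ b = 1 ∧ c = 2) ∨ (a = 0 ∧ b = 2 ∧ c = 1) ∨ (a = 1 ∧ b = 0 ∧ c = 2) ∨
    (a = 1 ∧ b = 2 ∧ c = 0) ∨ (a = 2 ∧ b = 0 ∧ c = 1) ∨ (a = 2 ∧ b = 1 ∧ c = 0) := by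
  intro a b c
  fin_cases a <;> fin_cases b <;> fin_cases c <;> decide

include hq in
lemma qg_A6 (hB : ∀ a b c d : G, a * b = c * d → a * d = c * b) :
    ∀ l1 l2 l3 l4 : Fin 3 ⊕ G × G, ∀ p p13 p14 p23 p24 : (G × Fin 3) ⊕ Unit,
    ¬QGIncid (Sum.inr ()) l1 → ¬QGIncid (Sum.inr ()) l2 → l1 ≠ l2 →
    QGIncid p l1 → QGIncid p l2 → l3 ≠ l4 →
    QGIncid p13 l1 → QGIncid p13 l3 → QGIncid p14 l1 → QGIncid p14 l4 →
    QGIncid p23 l2 → QGIncid p23 l3 → QGIncid p24 l2 → QGIncid p24 l4 →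
    p13 ≠ p14 → p13 ≠ p23 → p13 ≠ p24 → p14 ≠ p23 → p14 ≠ p24 → p23 ≠ p24 →
    ∃ q : (G × Fin 3) ⊕ Unit, QGIncid q l3 ∧ QGIncid q l4 := by
  intro l1 l2 l3 l4 p p13 p14 p23 p24 hD1 hD2 h12 hp1 hp2 h34
    q13a q13b q14a q14b q23a q23b q24a q24b d1 d2 d3 d4 d5 d6
  rcases l1 with j1 | ⟨g1, h1⟩
  · exact absurd trivial hD1
  rcases l2 with j2 | ⟨g2, h2⟩
  · exact absurd trivial hD2
  -- if l3 or l4 is special, they meet everything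
  rcases l3 with j3 | ⟨g3, h3⟩
  · rcases l4 with j4 | ⟨g4, h4⟩
    · exact ⟨Sum.inr (), trivial, trivial⟩
    · fin_cases j3
      · exact ⟨Sum.inl (g4, 0), rfl, Or.inl ⟨rfl, rfl⟩⟩
      · exact ⟨Sum.inl (g4 * h4, 1), rfl, Or.inr (Or.inl ⟨rfl, rfl⟩)⟩
      · exact ⟨Sum.inl (h4, 2), rfl, Or.inr (Or.inr ⟨rfl, rfl⟩)⟩
  rcases l4 with j4 | ⟨g4, h4⟩
  · fin_cases j4
    · exact ⟨Sum.inl (g3, 0), Or.inl ⟨rfl, rfl⟩, rfl⟩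
    · exact ⟨Sum.inl (g3 * h3, 1), Or.inr (Or.inl ⟨rfl, rfl⟩), rfl⟩
    · exact ⟨Sum.inl (h3, 2), Or.inr (Or.inr ⟨rfl, rfl⟩), rfl⟩
  -- all four lines are ordinary; all five points are ordinary
  rcases p with ⟨x0, i0⟩ | ⟨⟩
  swap
  · exact absurd hp1 (fun f => f)
  rcases p13 with ⟨x13, i13⟩ | ⟨⟩
  swap
  · exact absurd q13a (fun f => f)
  rcases p14 with ⟨x14, i14⟩ | ⟨⟩
  swap
  · exact absurd q14a (fun f => f)
  rcases p23 with ⟨x23, i23⟩ | ⟨⟩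
  swap
  · exact absurd q23a (fun f => f)
  rcases p24 with ⟨x24, i24⟩ | ⟨⟩
  swap
  · exact absurd q24a (fun f => f)
  -- slot distinctness
  have i1314 : i13 ≠ i14 := by
    rintro rfl; exact d1 (by rw [qg_slot_unique q13a q14a])
  have i2324 : i23 ≠ i24 := by
    rintro rfl; exact d6 (by rw [qg_slot_unique q23a q24a])
  have i1323 : i13 ≠ i23 := by
    rintro rfl; exact d2 (by rw [qg_slot_unique q13b q23b])
  have i1424 : i14 ≠ i24 := by
    rintro rfl; exact d5 (by rw [qg_slot_unique q14b q24b])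
  by_cases c13 : i13 = i0
  · -- p13 = p, hence l3 = l2
    subst c13
    have ex : x0 = x13 := qg_slot_unique hp1 q13a
    subst ex
    obtain ⟨eg, eh⟩ := qg_line_unique hq i1323 q13b q23b hp2 q23a
    refine ⟨Sum.inl (x24, i24), ?_, q24b⟩
    rw [eg, eh]; exact q24a
  by_cases c23 : i23 = i0
  · -- p23 = p, hence l3 = l1
    subst c23
    have ex : x0 = x23 := qg_slot_unique hp2 q23a
    subst ex
    obtain ⟨eg, eh⟩ := qg_line_unique hq i1323 q13b q23b q13a hp1
    refine ⟨Sum.inl (x14, i14), ?_, q14b⟩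
    rw [eg, eh]; exact q14a
  by_cases c14 : i14 = i0
  · -- p14 = p, hence l4 = l2
    subst c14
    have ex : x0 = x14 := qg_slot_unique hp1 q14a
    subst ex
    obtain ⟨eg, eh⟩ := qg_line_unique hq i1424 q14b q24b hp2 q24a
    refine ⟨Sum.inl (x23, i23), q23b, ?_⟩
    rw [eg, eh]; exact q23a
  by_cases c24 : i24 = i0
  · -- p24 = p, hence l4 = l1
    subst c24
    have ex : x0 = x24 := qg_slot_unique hp2 q24a
    subst ex
    obtain ⟨eg, eh⟩ := qg_line_unique hq i1424 q14b q24b q14a hp1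
    refine ⟨Sum.inl (x13, i13), q13b, ?_⟩
    rw [eg, eh]; exact q13a
  -- main case: slots are (i13, i14) = (j, k) and (i23, i24) = (k, j)
  have e23 : i23 = i14 := fin3_pigeon i0 i13 i14 i23 c13 c14 i1314 c23 i1323.symm
  have e24 : i24 = i13 := fin3_pigeon i0 i14 i13 i24 c14 c13 i1314.symm c24 i1424.symm
  rcases fin3_triples i0 i13 i14 c13 c14 i1314 with
    ⟨e0, e3, e4⟩ | ⟨e0, e3, e4⟩ | ⟨e0, e3, e4⟩ | ⟨e0, e3, e4⟩ | ⟨e0, e3, e4⟩ | ⟨e0, e3, e4⟩ <;>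
      subst e0 <;> subst e3 <;> subst e4 <;> subst e23 <;> subst e24 <;>
      simp only [QGIncid] at hp1 hp2 q13a q13b q14a q14b q23a q23b q24a q24b <;>
      simp at hp1 hp2 q13a q13b q14a q14b q23a q23b q24a q24b
  · -- i0 = 0, i13 = 1, i14 = 2
    have hg : g1 = g2 := hp1.symm.trans hp2
    have E13 : g3 * h3 = g1 * h1 := q13b.symm.trans q13a
    have E14 : h4 = h1 := q14b.symm.trans q14a
    have E23 : h3 = h2 := q23b.symm.trans q23a
    have E24 : g4 * h4 = g2 * h2 := q24b.symm.trans q24a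
    have e1 : g3 * h2 = g1 * h1 := by rw [← E23]; exact E13
    have e2 : g3 * h1 = g1 * h2 := hB _ _ _ _ e1
    have e3 : g4 * h1 = g1 * h2 := by
      calc g4 * h1 = g4 * h4 := by rw [E14]
        _ = g2 * h2 := E24
        _ = g1 * h2 := by rw [hg]
    exact ⟨Sum.inl (g3, 0), Or.inl ⟨rfl, rfl⟩,
      Or.inl ⟨rfl, (qg_rcancel hq (e3.trans e2.symm)).symm⟩⟩
  · -- i0 = 0, i13 = 2, i14 = 1
    have hg : g1 = g2 := hp1.symm.trans hp2
    have E13 : h3 = h1 := q13b.symm.trans q13a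
    have E14 : g4 * h4 = g1 * h1 := q14b.symm.trans q14a
    have E23 : g3 * h3 = g2 * h2 := q23b.symm.trans q23a
    have E24 : h4 = h2 := q24b.symm.trans q24a
    have e1 : g3 * h1 = g1 * h2 := by
      calc g3 * h1 = g3 * h3 := by rw [E13]
        _ = g2 * h2 := E23
        _ = g1 * h2 := by rw [hg]
    have e2 : g3 * h2 = g1 * h1 := hB _ _ _ _ e1
    have e3 : g4 * h2 = g1 * h1 := by
      calc g4 * h2 = g4 * h4 := by rw [E24]
        _ = g1 * h1 := E14
    exact ⟨Sum.inl (g3, 0), Or.inl ⟨rfl, rfl⟩,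
      Or.inl ⟨rfl, (qg_rcancel hq (e3.trans e2.symm)).symm⟩⟩
  · -- i0 = 1, i13 = 0, i14 = 2
    have hb : g1 * h1 = g2 * h2 := hp1.symm.trans hp2
    have E13 : g3 = g1 := q13b.symm.trans q13a
    have E14 : h4 = h1 := q14b.symm.trans q14a
    have E23 : h3 = h2 := q23b.symm.trans q23a
    have E24 : g4 = g2 := q24b.symm.trans q24a
    have e1 : g3 * h3 = g4 * h4 := by
      calc g3 * h3 = g1 * h2 := by rw [E13, E23]
        _ = g2 * h1 := hB _ _ _ _ hb
        _ = g4 * h4 := by rw [E24, E14]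
    exact ⟨Sum.inl (g3 * h3, 1), Or.inr (Or.inl ⟨rfl, rfl⟩), Or.inr (Or.inl ⟨rfl, e1⟩)⟩
  · -- i0 = 1, i13 = 2, i14 = 0
    have hb : g1 * h1 = g2 * h2 := hp1.symm.trans hp2
    have E13 : h3 = h1 := q13b.symm.trans q13a
    have E14 : g4 = g1 := q14b.symm.trans q14a
    have E23 : g3 = g2 := q23b.symm.trans q23a
    have E24 : h4 = h2 := q24b.symm.trans q24a
    have e1 : g3 * h3 = g4 * h4 := by
      calc g3 * h3 = g2 * h1 := by rw [E23, E13]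
        _ = g1 * h2 := (hB _ _ _ _ hb).symm
        _ = g4 * h4 := by rw [E14, E24]
    exact ⟨Sum.inl (g3 * h3, 1), Or.inr (Or.inl ⟨rfl, rfl⟩), Or.inr (Or.inl ⟨rfl, e1⟩)⟩
  · -- i0 = 2, i13 = 0, i14 = 1
    have hh : h1 = h2 := hp1.symm.trans hp2
    have E13 : g3 = g1 := q13b.symm.trans q13a
    have E14 : g4 * h4 = g1 * h1 := q14b.symm.trans q14a
    have E23 : g3 * h3 = g2 * h2 := q23b.symm.trans q23a
    have E24 : g4 = g2 := q24b.symm.trans q24a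
    have e1 : g1 * h3 = g2 * h1 := by
      calc g1 * h3 = g3 * h3 := by rw [E13]
        _ = g2 * h2 := E23
        _ = g2 * h1 := by rw [hh]
    have e2 : g1 * h1 = g2 * h3 := hB _ _ _ _ e1
    have e3 : g2 * h4 = g2 * h3 := by
      calc g2 * h4 = g4 * h4 := by rw [E24]
        _ = g1 * h1 := E14
        _ = g2 * h3 := e2
    exact ⟨Sum.inl (h3, 2), Or.inr (Or.inr ⟨rfl, rfl⟩),
      Or.inr (Or.inr ⟨rfl, (qg_lcancel hq e3).symm⟩)⟩
  · -- i0 = 2, i13 = 1, i14 = 0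
    have hh : h1 = h2 := hp1.symm.trans hp2
    have E13 : g3 * h3 = g1 * h1 := q13b.symm.trans q13a
    have E14 : g4 = g1 := q14b.symm.trans q14a
    have E23 : g3 = g2 := q23b.symm.trans q23a
    have E24 : g4 * h4 = g2 * h2 := q24b.symm.trans q24a
    have e1 : g2 * h3 = g1 * h1 := by
      calc g2 * h3 = g3 * h3 := by rw [E23]
        _ = g1 * h1 := E13
    have e2 : g2 * h1 = g1 * h3 := hB _ _ _ _ e1
    have e3 : g1 * h4 = g1 * h3 := by
      calc g1 * h4 = g4 * h4 := by rw [E14]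
        _ = g2 * h2 := E24
        _ = g2 * h1 := by rw [hh]
        _ = g1 * h3 := e2
    exact ⟨Sum.inl (h3, 2), Or.inr (Or.inr ⟨rfl, rfl⟩),
      Or.inr (Or.inr ⟨rfl, (qg_lcancel hq e3).symm⟩)⟩

end Build3

section GrpBuild
variable {G : Type} [Mul G]
variable (hq : ∀ a : G, Function.Bijective (fun x => a * x) ∧
      Function.Bijective (fun x => x * a))

/-- right translation by `e` as an equivalence -/
noncomputable def qgRe (e : G) : G ≃ G := Equiv.ofBijective _ (hq e).2
/-- left translation by `e` as an equivalence -/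
noncomputable def qgLe (e : G) : G ≃ G := Equiv.ofBijective _ (hq e).1

/-- the principal isotope multiplication -/
noncomputable def qgm (e : G) (x y : G) : G := (qgRe hq e).symm x * (qgLe hq e).symm y

lemma qgm_one (e : G) (x : G) : qgm hq e x (e * e) = x := by
  have h1 : (qgLe hq e).symm (e * e) = e := (qgLe hq e).symm_apply_apply e
  have h2 : (qgRe hq e).symm x * e = x := (qgRe hq e).apply_symm_apply x
  rw [qgm, h1, h2]

lemma qgm_one' (e : G) (y : G) : qgm hq e (e * e) y = y := by
  have h1 : (qgRe hq e).symm (e * e) = e := (qgRe hq e).symm_apply_apply e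
  have h2 : e * (qgLe hq e).symm y = y := (qgLe hq e).apply_symm_apply y
  rw [qgm, h1, h2]

variable (hB : ∀ a b c d : G, a * b = c * d → a * d = c * b)

include hB in
lemma qgm_swap (e : G) {a b c d : G} (h : qgm hq e a b = qgm hq e c d) :
    qgm hq e a d = qgm hq e c b := hB _ _ _ _ h

include hB in
lemma qgm_sq (e : G) (a : G) : qgm hq e a a = e * e := by
  have h1 : qgm hq e a (e * e) = qgm hq e (e * e) a := by
    rw [qgm_one, qgm_one']
  have h2 := qgm_swap hq hB e h1
  rwa [qgm_one] at h2

include hB in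
lemma qgm_totsym (e : G) {a b c : G} (h : qgm hq e a b = c) : qgm hq e c b = a := by
  have h1 : qgm hq e a b = qgm hq e c (e * e) := h.trans (qgm_one hq e c).symm
  have h2 := qgm_swap hq hB e h1
  rw [qgm_one] at h2
  exact h2.symm

include hB in
lemma qgm_comm (e : G) (a b : G) : qgm hq e a b = qgm hq e b a := by
  have t1 : qgm hq e (qgm hq e a b) b = a := qgm_totsym hq hB e rfl
  have t2 : qgm hq e (qgm hq e a b) b = qgm hq e (e * e) a := by
    rw [t1, qgm_one']
  have t3 := qgm_swap hq hB e t2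
  rw [qgm_one'] at t3
  exact (qgm_totsym hq hB e t3).symm

include hB in
lemma qgm_assoc (e : G) (x y z : G) :
    qgm hq e (qgm hq e x y) z = qgm hq e x (qgm hq e y z) := by
  have hsx : qgm hq e (qgm hq e x y) x = y := qgm_totsym hq hB e (qgm_comm hq hB e y x)
  have hwz : qgm hq e (qgm hq e y z) z = y := qgm_totsym hq hB e rfl
  have h1 := qgm_swap hq hB e (hsx.trans hwz.symm)
  exact h1.trans (qgm_comm hq hB e (qgm hq e y z) x)

/-- the commutative group structure on `G` obtained from the principal isotope -/
noncomputable def qgGrp (e : G) : CommGroup G where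
  mul := qgm hq e
  one := e * e
  inv := fun a => a
  mul_assoc := qgm_assoc hq hB e
  one_mul := qgm_one' hq e
  mul_one := qgm_one hq e
  inv_mul_cancel := qgm_sq hq hB e
  mul_comm := qgm_comm hq hB e

end GrpBuild

/-- The incidence structure of a quasigroup satisfying the swap property is a
projective rectangle. -/
noncomputable def qg_rect {G : Type} [Mul G] [Nontrivial G]
    (hq : ∀ a : G, Function.Bijective (fun x => a * x) ∧
      Function.Bijective (fun x => x * a))
    (hB : ∀ a b c d : G, a * b = c * d → a * d = c * b) :
    ProjRect ((G × Fin 3) ⊕ Unit) (Fin 3 ⊕ G × G) where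
  Incid := QGIncid
  D := Sum.inr ()
  A1 := qg_A1 hq
  A2 := qg_A2
  A3 := qg_A3
  A5 := qg_A5
  A6 := qg_A6 hq hB

/-- L_0(G K_3) is a projective rectangle with special point D iff the quasigroup G is
isotopic to a commutative group of exponent 2. -/
theorem stmt_19 {G : Type} [Mul G] [Nontrivial G]
    (hq : ∀ a : G, Function.Bijective (fun x => a * x) ∧
      Function.Bijective (fun x => x * a)) :
    (∃ R : ProjRect ((G × Fin 3) ⊕ Unit) (Fin 3 ⊕ G × G),
        R.Incid = QGIncid ∧ R.D = Sum.inr ()) ↔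
    ∃ (H : Type) (_ : CommGroup H) (α β γ : G → H),
      (∀ x : H, x * x = 1) ∧ Function.Bijective α ∧ Function.Bijective β ∧
      Function.Bijective γ ∧ ∀ x y : G, γ (x * y) = α x * β y := by
  constructor
  · rintro ⟨R, hI, hD⟩
    have hB : ∀ a b c d : G, a * b = c * d → a * d = c * b := by
      intro a b c d habcd
      by_cases hac : a = c
      · subst hac
        rw [qg_lcancel hq habcd]
      · have hbd : b ≠ d := by rintro rfl; exact hac (qg_rcancel hq habcd)
        have h6 := R.A6 (Sum.inr (a, b)) (Sum.inr (c, d)) (Sum.inr (a, d)) (Sum.inr (c, b))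
          (Sum.inl (a * b, 1)) (Sum.inl (a, 0)) (Sum.inl (b, 2)) (Sum.inl (d, 2))
          (Sum.inl (c, 0))
        rw [hI, hD] at h6
        have h12 : (Sum.inr (a, b) : Fin 3 ⊕ G × G) ≠ Sum.inr (c, d) := by
          simp only [ne_eq, Sum.inr.injEq, Prod.mk.injEq, not_and]
          exact fun e _ => absurd e hac
        have h34 : (Sum.inr (a, d) : Fin 3 ⊕ G × G) ≠ Sum.inr (c, b) := by
          simp only [ne_eq, Sum.inr.injEq, Prod.mk.injEq, not_and]
          exact fun e _ => absurd e hac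
        obtain ⟨q, hq3, hq4⟩ := h6 (fun f => f) (fun f => f) h12
          (Or.inr (Or.inl ⟨rfl, rfl⟩)) (Or.inr (Or.inl ⟨rfl, habcd⟩)) h34
          (Or.inl ⟨rfl, rfl⟩) (Or.inl ⟨rfl, rfl⟩)
          (Or.inr (Or.inr ⟨rfl, rfl⟩)) (Or.inr (Or.inr ⟨rfl, rfl⟩))
          (Or.inr (Or.inr ⟨rfl, rfl⟩)) (Or.inr (Or.inr ⟨rfl, rfl⟩))
          (Or.inl ⟨rfl, rfl⟩) (Or.inl ⟨rfl, rfl⟩)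
          (by simp) (by simp) (by simp [hac]) (by simp [hbd]) (by simp) (by simp)
        rcases q with ⟨x, i⟩ | ⟨⟩
        · fin_cases i <;> simp [QGIncid] at hq3 hq4
          · exact absurd (hq3.symm.trans hq4) hac
          · exact hq3.symm.trans hq4
          · exact absurd (hq4.symm.trans hq3) hbd
        · exact absurd hq3 (fun f => f)
    obtain ⟨e⟩ : Nonempty G := inferInstance
    refine ⟨G, qgGrp hq hB e, fun x => x * e, fun y => e * y, id,
      ?_, (hq e).2, (hq e).1, Function.bijective_id, ?_⟩
    · intro x
      exact qgm_sq hq hB e x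
    · intro x y
      show x * y = qgm hq e (x * e) (e * y)
      have h1 : (qgRe hq e).symm (x * e) = x := (qgRe hq e).symm_apply_apply x
      have h2 : (qgLe hq e).symm (e * y) = y := (qgLe hq e).symm_apply_apply y
      rw [qgm, h1, h2]
  · rintro ⟨H, hH, α, β, γ, h2, hα, hβ, hγ, hhom⟩
    have key : ∀ A B C D : H, A * B = C * D → A * D = C * B := by
      intro A B C D hp
      have h1 : A * B * (B * D) = C * D * (B * D) := by rw [hp]
      rw [mul_assoc A B (B * D), ← mul_assoc B B D, h2 B, one_mul] at h1
      rw [mul_assoc C D (B * D), mul_comm B D, ← mul_assoc D D B, h2 D, one_mul] at h1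
      exact h1
    have hB : ∀ a b c d : G, a * b = c * d → a * d = c * b := by
      intro a b c d habcd
      apply hγ.injective
      rw [hhom, hhom]
      apply key
      rw [← hhom, ← hhom, habcd]
    exact ⟨qg_rect hq hB, rfl, rfl⟩
end
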